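/- Let (i,j) be an index pair (1 ≤ i ≤ j, i + j ≤ 2n) with j < n or i + j = 2n. Suppose (V_{k,l}) and (V′_{k,l}) are two points of SpR_{2n} that both lie in Z_{i,j} and in no Z_{k,l} with (k,l) ≠ (i,j), and suppose V_{k,k} = V′_{k,k} for all 1 ≤ k ≤ n. Then (V_{k,l}) = (V′_{k,l}). (This says the resolution map SpR_{2n} → Sp𝓕ᵃ_{2n} is injective on the open part Z°_{i,j} of every non-exceptional divisor.) -/

import Mathlib

noncomputable section

/-- The ambient 2n-dimensional complex vector space `W = ℂ^{2n}`. -/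
abbrev Wsp (n : ℕ) := Fin (2*n) → ℂ

/-- The basis vector `w_k` (1-based index `k ∈ {1,…,2n}`). -/
def wvec (n k : ℕ) : Wsp n := fun i => if (i : ℕ) + 1 = k then 1 else 0

/-- The standard symplectic form: `⟨w_i, w_{2n+1-i}⟩ = 1` for `1 ≤ i ≤ n`,
and `⟨w_i, w_j⟩ = 0` for `j ≠ 2n+1-i`. -/
def sform (n : ℕ) (x y : Wsp n) : ℂ :=
  ∑ i : Fin (2*n), (if (i : ℕ) < n then 1 else -1) * x i *
    y ⟨2*n - 1 - (i : ℕ), by have := i.isLt; omega⟩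

/-- A subspace is isotropic if the symplectic form vanishes on it. -/
def IsIsotropic (n : ℕ) (U : Submodule ℂ (Wsp n)) : Prop :=
  ∀ u ∈ U, ∀ v ∈ U, sform n u v = 0

/-- The projection `pr_k` along `w_k` (1-based). -/
def prj (n k : ℕ) : Wsp n →ₗ[ℂ] Wsp n where
  toFun x := fun i => if (i : ℕ) + 1 = k then 0 else x i
  map_add' x y := by funext i; by_cases h : (i : ℕ) + 1 = k <;> simp [h]
  map_smul' c x := by funext i; by_cases h : (i : ℕ) + 1 = k <;> simp [h]

/-- The subspace `W_{i,j} = span(w_1,…,w_i,w_{j+1},…,w_{2n})` (1-based). -/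
def WIJ (n i j : ℕ) : Submodule ℂ (Wsp n) :=
  Submodule.span ℂ (wvec n '' {k | (1 ≤ k ∧ k ≤ i) ∨ (j + 1 ≤ k ∧ k ≤ 2*n)})

namespace SpAux

open Submodule Module

variable {n : ℕ}

/-- coordinate submodule: functions supported on `{i | i+1 ∈ S}` (1-based indexing). -/
def coordSub (n : ℕ) (S : Set ℕ) : Submodule ℂ (Wsp n) where
  carrier := {x | ∀ i : Fin (2*n), ((i:ℕ)+1) ∉ S → x i = 0}
  zero_mem' := fun _ _ => rfl
  add_mem' := fun hx hy i hi => by simp [Pi.add_apply, hx i hi, hy i hi]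
  smul_mem' := fun c x hx i hi => by simp [Pi.smul_apply, hx i hi]

lemma mem_coordSub {S : Set ℕ} {x : Wsp n} :
    x ∈ coordSub n S ↔ ∀ i : Fin (2*n), ((i:ℕ)+1) ∉ S → x i = 0 := Iff.rfl

lemma wvec_apply (k : ℕ) (i : Fin (2*n)) : wvec n k i = if (i:ℕ)+1 = k then 1 else 0 := rfl

lemma wvec_mem_coordSub {S : Set ℕ} {k : ℕ} (hk : k ∈ S) : wvec n k ∈ coordSub n S := by
  intro i hi
  rw [wvec_apply, if_neg]
  intro h
  rw [h] at hi
  exact hi hk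

lemma sum_coord (g : Fin (2*n) → ℂ) (j : Fin (2*n)) :
    (∑ i : Fin (2*n), g i • wvec n ((i:ℕ)+1)) j = g j := by
  rw [Finset.sum_apply]
  have h : ∀ i : Fin (2*n), (g i • wvec n ((i:ℕ)+1)) j = if i = j then g i else 0 := by
    intro i
    rw [Pi.smul_apply, wvec_apply, smul_eq_mul]
    by_cases h : i = j
    · rw [if_pos h, if_pos (by rw [h]), mul_one]
    · rw [if_neg h, if_neg (fun hc => h (Fin.ext (by omega))), mul_zero]
  rw [Finset.sum_congr rfl (fun i _ => h i), Finset.sum_ite_eq' Finset.univ j g,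
    if_pos (Finset.mem_univ j)]

lemma span_wvec (S : Set ℕ) : Submodule.span ℂ (wvec n '' S) = coordSub n S := by
  apply le_antisymm
  · rw [Submodule.span_le]
    rintro _ ⟨k, hk, rfl⟩
    exact wvec_mem_coordSub hk
  · intro x hx
    have hrew : x = ∑ i : Fin (2*n), x i • wvec n ((i:ℕ)+1) := by
      funext j; rw [sum_coord]
    rw [hrew]
    apply Submodule.sum_mem
    intro i _
    by_cases h : ((i:ℕ)+1) ∈ S
    · exact Submodule.smul_mem _ _ (Submodule.subset_span ⟨(i:ℕ)+1, h, rfl⟩)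
    · rw [hx i h, zero_smul]
      exact Submodule.zero_mem _

lemma WIJ_eq (a b : ℕ) :
    WIJ n a b = coordSub n {k | (1 ≤ k ∧ k ≤ a) ∨ (b + 1 ≤ k ∧ k ≤ 2*n)} := span_wvec _

lemma mem_WIJ {a b : ℕ} {x : Wsp n} :
    x ∈ WIJ n a b ↔ ∀ i : Fin (2*n), a ≤ (i:ℕ) → (i:ℕ) < b → x i = 0 := by
  rw [WIJ_eq, mem_coordSub]
  constructor
  · intro h i h1 h2
    apply h i
    intro hmem
    rcases hmem with ⟨u, v⟩ | ⟨u, v⟩ <;> omega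
  · intro h i hi
    have hlt := i.isLt
    simp only [Set.mem_setOf_eq] at hi
    exact h i (by omega) (by omega)

lemma not_mem_WIJ_wvec {a b m : ℕ} (h1 : a + 1 ≤ m) (h2 : m ≤ b) (h3 : m ≤ 2*n) :
    wvec n m ∉ WIJ n a b := by
  intro h
  have := mem_WIJ.mp h ⟨m-1, by omega⟩ (by simp; omega) (by simp; omega)
  rw [wvec_apply, if_pos (by simp; omega)] at this
  exact one_ne_zero this

lemma WIJ_mono_left {a a' b : ℕ} (h : a ≤ a') : WIJ n a b ≤ WIJ n a' b := by
  intro x hx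
  rw [mem_WIJ] at *
  intro i h1 h2
  exact hx i (le_trans h h1) h2

lemma wvec_ne_zero {m : ℕ} (h1 : 1 ≤ m) (h2 : m ≤ 2*n) : wvec n m ≠ 0 := by
  intro h
  have := congrFun h ⟨m-1, by omega⟩
  rw [wvec_apply, if_pos (by simp; omega)] at this
  exact one_ne_zero this

/-! ### projection lemmas -/

lemma prj_apply (k : ℕ) (x : Wsp n) (i : Fin (2*n)) :
    prj n k x i = if (i:ℕ)+1 = k then 0 else x i := rfl

lemma prj_add {m : ℕ} (h1 : 1 ≤ m) (h2 : m ≤ 2*n) (x : Wsp n) :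
    x = prj n m x + x ⟨m-1, by omega⟩ • wvec n m := by
  funext i
  simp only [Pi.add_apply, Pi.smul_apply, prj_apply, wvec_apply, smul_eq_mul]
  by_cases h : (i:ℕ)+1 = m
  · have hidx : (⟨m-1, by omega⟩ : Fin (2*n)) = i := Fin.ext (by simp; omega)
    rw [if_pos h, if_pos h, zero_add, mul_one, hidx]
  · rw [if_neg h, if_neg h, mul_zero, add_zero]

lemma prj_wvec (m : ℕ) : prj n m (wvec n m) = 0 := by
  funext i
  simp only [prj_apply, wvec_apply, Pi.zero_apply]
  by_cases h : (i:ℕ)+1 = m <;> simp [h]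

lemma mem_span_of_prj_eq_zero {m : ℕ} (h1 : 1 ≤ m) (h2 : m ≤ 2*n) {x : Wsp n}
    (h : prj n m x = 0) : x ∈ Submodule.span ℂ {wvec n m} := by
  rw [Submodule.mem_span_singleton]
  have := prj_add h1 h2 x
  rw [h, zero_add] at this
  exact ⟨_, this.symm⟩

lemma finrank_map_prj_of_not_mem {m : ℕ} (h1 : 1 ≤ m) (h2 : m ≤ 2*n)
    {U : Submodule ℂ (Wsp n)} (hw : wvec n m ∉ U) :
    finrank ℂ (U.map (prj n m)) = finrank ℂ U := by
  have hker : LinearMap.ker ((prj n m).domRestrict U) = ⊥ := by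
    rw [Submodule.eq_bot_iff]
    intro x hx
    rw [LinearMap.mem_ker, LinearMap.domRestrict_apply] at hx
    have hx' := mem_span_of_prj_eq_zero h1 h2 hx
    rw [Submodule.mem_span_singleton] at hx'
    obtain ⟨c, hc⟩ := hx'
    have hcz : c = 0 := by
      by_contra hcz
      apply hw
      have : wvec n m = c⁻¹ • (x : Wsp n) := by
        rw [← hc, smul_smul, inv_mul_cancel₀ hcz, one_smul]
      rw [this]
      exact Submodule.smul_mem _ _ x.2
    apply Subtype.ext
    rw [← hc, hcz, zero_smul]
    rfl
  have h := LinearMap.finrank_range_add_finrank_ker ((prj n m).domRestrict U)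
  rw [hker, finrank_bot, add_zero, LinearMap.range_domRestrict] at h
  exact h

lemma finrank_map_prj_of_mem {m : ℕ} (h1 : 1 ≤ m) (h2 : m ≤ 2*n)
    {U : Submodule ℂ (Wsp n)} (hw : wvec n m ∈ U) :
    finrank ℂ (U.map (prj n m)) + 1 = finrank ℂ U := by
  have hker : LinearMap.ker ((prj n m).domRestrict U)
      = Submodule.span ℂ {(⟨wvec n m, hw⟩ : U)} := by
    apply le_antisymm
    · intro x hx
      rw [LinearMap.mem_ker, LinearMap.domRestrict_apply] at hx
      have hx' := mem_span_of_prj_eq_zero h1 h2 hx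
      rw [Submodule.mem_span_singleton] at hx' ⊢
      obtain ⟨c, hc⟩ := hx'
      exact ⟨c, Subtype.ext hc⟩
    · rw [Submodule.span_singleton_le_iff_mem]
      rw [LinearMap.mem_ker, LinearMap.domRestrict_apply]
      exact prj_wvec m
  have hsp : finrank ℂ (Submodule.span ℂ {(⟨wvec n m, hw⟩ : U)}) = 1 := by
    apply finrank_span_singleton
    intro h
    exact wvec_ne_zero h1 h2 (congrArg Subtype.val h)
  have h := LinearMap.finrank_range_add_finrank_ker ((prj n m).domRestrict U)
  rw [hker, hsp, LinearMap.range_domRestrict] at h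
  exact h

lemma map_prj_le_self {m : ℕ} (h1 : 1 ≤ m) (h2 : m ≤ 2*n) {U : Submodule ℂ (Wsp n)}
    (hw : wvec n m ∈ U) : U.map (prj n m) ≤ U := by
  rintro _ ⟨x, hx, rfl⟩
  have h' : prj n m x = x - x ⟨m-1, by omega⟩ • wvec n m := by
    rw [eq_sub_iff_add_eq]
    exact (prj_add h1 h2 x).symm
  rw [h']
  exact Submodule.sub_mem _ hx (Submodule.smul_mem _ _ hw)

lemma le_map_sup {m : ℕ} (h1 : 1 ≤ m) (h2 : m ≤ 2*n) (U : Submodule ℂ (Wsp n)) :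
    U ≤ U.map (prj n m) ⊔ Submodule.span ℂ {wvec n m} := by
  intro x hx
  rw [prj_add h1 h2 x]
  exact Submodule.add_mem _ (Submodule.mem_sup_left ⟨x, hx, rfl⟩)
    (Submodule.mem_sup_right (Submodule.smul_mem _ _ (Submodule.mem_span_singleton_self _)))

lemma map_prj_WIJ {a l : ℕ} {x : Wsp n} (hx : x ∈ WIJ n a l) :
    prj n (l+1) x ∈ WIJ n a (l+1) := by
  rw [mem_WIJ] at *
  intro i h1 h2
  rw [prj_apply]
  by_cases h : (i:ℕ)+1 = l+1
  · rw [if_pos h]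
  · rw [if_neg h]
    exact hx i h1 (by omega)

end SpAux
namespace SpAux

open Submodule Module

variable {n : ℕ}

/-! ### the symplectic form as a bilinear form -/

def Bform (n : ℕ) : LinearMap.BilinForm ℂ (Wsp n) :=
  LinearMap.mk₂ ℂ (sform n)
    (fun x y z => by
      simp only [sform, Pi.add_apply]
      rw [← Finset.sum_add_distrib]
      exact Finset.sum_congr rfl (fun i _ => by ring))
    (fun c x y => by
      simp only [sform, Pi.smul_apply, smul_eq_mul]
      rw [Finset.mul_sum]
      exact Finset.sum_congr rfl (fun i _ => by ring))
    (fun x y z => by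
      simp only [sform, Pi.add_apply]
      rw [← Finset.sum_add_distrib]
      exact Finset.sum_congr rfl (fun i _ => by ring))
    (fun c x y => by
      simp only [sform, Pi.smul_apply, smul_eq_mul]
      rw [Finset.mul_sum]
      exact Finset.sum_congr rfl (fun i _ => by ring))

lemma Bform_apply (x y : Wsp n) : Bform n x y = sform n x y := rfl

lemma fin_mk_val {m a : ℕ} (h : a < m) : ((⟨a, h⟩ : Fin m) : ℕ) = a := rfl

lemma sform_alt (x : Wsp n) : sform n x x = 0 := by
  rw [sform]
  apply Finset.sum_ninvolution (g := fun i : Fin (2*n) => ⟨2*n-1-(i:ℕ), by have := i.isLt; omega⟩)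
  · intro i
    have hlt := i.isLt
    simp only [fin_mk_val]
    have hidx : (⟨2*n-1-(2*n-1-(i:ℕ)), by omega⟩ : Fin (2*n)) = i :=
      Fin.ext (by simp only [fin_mk_val]; omega)
    rw [hidx]
    by_cases h : (i:ℕ) < n
    · rw [if_pos h, if_neg (show ¬(2*n-1-(i:ℕ) < n) by omega)]
      ring
    · rw [if_neg h, if_pos (show 2*n-1-(i:ℕ) < n by omega)]
      ring
  · intro i _
    intro h
    have := congrArg Fin.val h
    simp only [fin_mk_val] at this
    have hlt := i.isLt
    omega
  · intro i
    exact Finset.mem_univ _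
  · intro i
    have := i.isLt
    apply Fin.ext
    simp only [fin_mk_val]
    omega

lemma Bform_isAlt : (Bform n).IsAlt := fun x => sform_alt x

lemma Bform_isRefl : (Bform n).IsRefl := Bform_isAlt.isRefl

lemma sform_wvec_right {p : ℕ} (h1 : 1 ≤ p) (h2 : p ≤ 2*n) (x : Wsp n) :
    sform n x (wvec n p) = (if 2*n-p < n then (1:ℂ) else -1) * x ⟨2*n-p, by omega⟩ := by
  rw [sform]
  rw [Finset.sum_eq_single (⟨2*n-p, by omega⟩ : Fin (2*n))]
  · simp only [wvec_apply, fin_mk_val]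
    rw [if_pos (show 2*n-1-(2*n-p)+1 = p by omega), mul_one]
  · intro i _ hne
    have hlt := i.isLt
    simp only [wvec_apply, fin_mk_val]
    rw [if_neg (show ¬(2*n-1-(i:ℕ)+1 = p) from ?_), mul_zero]
    intro h
    apply hne
    apply Fin.ext
    simp only [fin_mk_val]
    omega
  · intro h
    exact absurd (Finset.mem_univ _) h

lemma Bform_nondeg : (Bform n).Nondegenerate := by
  refine (LinearMap.IsRefl.nondegenerate_iff_separatingLeft Bform_isRefl).mpr ?_
  intro x hx
  funext i
  have hlt := i.isLt
  have h := hx (wvec n (2*n - (i:ℕ)))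
  rw [Bform_apply, sform_wvec_right (by omega) (by omega)] at h
  have hidx : (⟨2*n - (2*n - (i:ℕ)), by omega⟩ : Fin (2*n)) = i := Fin.ext (by simp only [fin_mk_val]; omega)
  rw [hidx] at h
  by_cases hc : 2*n - (2*n - (i:ℕ)) < n
  · rw [if_pos hc, one_mul] at h
    exact h
  · rw [if_neg hc, neg_one_mul, neg_eq_zero] at h
    exact h

lemma finrank_Wsp : finrank ℂ (Wsp n) = 2*n := by
  rw [Module.finrank_fin_fun]

lemma isoforce {k : ℕ} (hk1 : 1 ≤ k) (hk2 : k ≤ n) {F : Submodule ℂ (Wsp n)}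
    (hF : F ≤ WIJ n (k-1) (2*n-k)) (hdim : finrank ℂ F = k) (hiso : IsIsotropic n F) :
    wvec n (2*n-k+1) ∈ F := by
  by_contra hw
  set O : Submodule ℂ (Wsp n) :=
    Submodule.span ℂ (wvec n '' {p | k+1 ≤ p ∧ p ≤ 2*n-k+1}) with hO
  have hOorth : O ≤ (Bform n).orthogonal F := by
    rw [hO, Submodule.span_le]
    rintro _ ⟨p, ⟨hp1, hp2⟩, rfl⟩
    rw [SetLike.mem_coe, LinearMap.BilinForm.mem_orthogonal_iff]
    intro f hf
    rw [Bform_apply,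
      sform_wvec_right (by omega) (by omega)]
    rw [mem_WIJ.mp (hF hf) ⟨2*n-p, by omega⟩ (by simp; omega) (by simp; omega), mul_zero]
  have hForth : F ≤ (Bform n).orthogonal F := by
    intro f hf
    rw [LinearMap.BilinForm.mem_orthogonal_iff]
    intro g hg
    exact hiso g hg f hf
  -- a linearly independent family inside O
  have hbase : LinearIndependent ℂ (fun i : Fin (2*n) => wvec n ((i:ℕ)+1)) := by
    rw [Fintype.linearIndependent_iff]
    intro g hg i
    have := congrFun hg i
    rw [sum_coord] at this
    exact this
  have hfam : LinearIndependent ℂ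
      (fun t : Fin (2*n-2*k+1) => wvec n (((k+(t:ℕ)):ℕ)+1)) :=
    hbase.comp (fun t : Fin (2*n-2*k+1) => (⟨k+(t:ℕ), by have := t.isLt; omega⟩ : Fin (2*n)))
      (fun a b hab => by
        apply Fin.ext
        have := congrArg Fin.val hab
        simp at this
        omega)
  have hmem : ∀ t : Fin (2*n-2*k+1), wvec n ((k+(t:ℕ))+1) ∈ O := fun t =>
    Submodule.subset_span ⟨(k+(t:ℕ))+1, ⟨by omega, by have := t.isLt; omega⟩, rfl⟩
  have hfam' : LinearIndependent ℂ
      (fun t : Fin (2*n-2*k+1) => (⟨wvec n ((k+(t:ℕ))+1), hmem t⟩ : O)) :=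
    LinearIndependent.of_comp O.subtype hfam
  have hcard : 2*n-2*k+1 ≤ finrank ℂ O := by
    have := hfam'.fintype_card_le_finrank
    simpa using this
  have hinf : F ⊓ O = ⊥ := by
    rw [Submodule.eq_bot_iff]
    intro x hx
    obtain ⟨hxF, hxO⟩ := Submodule.mem_inf.mp hx
    have hx1 : x ∈ coordSub n {p | k+1 ≤ p ∧ p ≤ 2*n-k+1} := by
      rw [hO, span_wvec] at hxO
      exact hxO
    have hx2 : x ∈ Submodule.span ℂ {wvec n (2*n-k+1)} := by
      rw [Submodule.mem_span_singleton]
      refine ⟨x ⟨2*n-k, by omega⟩, ?_⟩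
      funext i
      have hlt := i.isLt
      rw [Pi.smul_apply, wvec_apply, smul_eq_mul]
      by_cases hi : (i:ℕ)+1 = 2*n-k+1
      · rw [if_pos hi, mul_one]
        congr 1
        exact Fin.ext (by simp; omega)
      · rw [if_neg hi, mul_zero]
        by_cases hT : k-1 ≤ (i:ℕ) ∧ (i:ℕ) < 2*n-k
        · exact (mem_WIJ.mp (hF hxF) i hT.1 hT.2).symm
        · refine (hx1 i ?_).symm
          simp only [Set.mem_setOf_eq]
          omega
    rw [Submodule.mem_span_singleton] at hx2
    obtain ⟨c, rfl⟩ := hx2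
    rcases eq_or_ne c 0 with hc | hc
    · rw [hc, zero_smul]
    · exfalso
      apply hw
      have := Submodule.smul_mem F c⁻¹ hxF
      rwa [smul_smul, inv_mul_cancel₀ hc, one_smul] at this
  have hsum := Submodule.finrank_sup_add_finrank_inf_eq F O
  rw [hinf, finrank_bot, add_zero, hdim] at hsum
  have hle : F ⊔ O ≤ (Bform n).orthogonal F := sup_le hForth hOorth
  have h1 : finrank ℂ (F ⊔ O : Submodule ℂ (Wsp n)) ≤ finrank ℂ ((Bform n).orthogonal F) :=
    Submodule.finrank_mono hle
  have h2 : finrank ℂ ((Bform n).orthogonal F) = 2*n - k := by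
    rw [LinearMap.BilinForm.finrank_orthogonal Bform_nondeg F, hdim, finrank_Wsp]
  omega

end SpAux

/-- Orthogonal complement with respect to the symplectic form. -/
def sperp (n : ℕ) (U : Submodule ℂ (Wsp n)) : Submodule ℂ (Wsp n) where
  carrier := {x | ∀ u ∈ U, sform n x u = 0}
  zero_mem' := by intro u hu; simp [sform]
  add_mem' := by
    intro a b ha hb u hu
    have ha' := ha u hu
    have hb' := hb u hu
    simp only [sform, Pi.add_apply, add_mul, mul_add, Finset.sum_add_distrib] at *
    rw [ha', hb', add_zero]
  smul_mem' := by
    intro c a ha u hu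
    have ha' := ha u hu
    simp only [sform, Pi.smul_apply, smul_eq_mul] at *
    calc ∑ i : Fin (2*n), (if (i : ℕ) < n then 1 else -1) * (c * a i) *
          u ⟨2*n - 1 - (i : ℕ), by have := i.isLt; omega⟩
        = c * ∑ i : Fin (2*n), (if (i : ℕ) < n then 1 else -1) * a i *
          u ⟨2*n - 1 - (i : ℕ), by have := i.isLt; omega⟩ := by
          rw [Finset.mul_sum]; congr 1; funext i; ring
      _ = 0 := by rw [ha', mul_zero]

/-- The points of the Bott–Samelson type resolution `SpR_{2n}`:
collections `(V_{i,j})` for `1 ≤ i ≤ j`, `i+j ≤ 2n`. -/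
structure IsSpR (n : ℕ) (V : ℕ → ℕ → Submodule ℂ (Wsp n)) : Prop where
  dim : ∀ i j, 1 ≤ i → i ≤ j → i + j ≤ 2*n → Module.finrank ℂ (V i j) = i
  sub : ∀ i j, 1 ≤ i → i ≤ j → i + j ≤ 2*n → V i j ≤ WIJ n i j
  mono : ∀ i j, 1 ≤ i → i + 1 ≤ j → (i + 1) + j ≤ 2*n → V i j ≤ V (i+1) j
  proj : ∀ i j, 1 ≤ i → i ≤ j → i + (j+1) ≤ 2*n →
    Submodule.map (prj n (j+1)) (V i j) ≤ V i (j+1)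
  isot : ∀ i, 1 ≤ i → i ≤ n → IsIsotropic n (V i (2*n - i))

/-- A point of `SpR_{2n}` lies in the divisor `Z_{i,j}` if
`V_{i,j} = V_{i-1,j+1} + ℂ w_{j+1}` (with `V_0 = 0`). -/
def InZ (n : ℕ) (V : ℕ → ℕ → Submodule ℂ (Wsp n)) (i j : ℕ) : Prop :=
  V i j = (if i = 1 then ⊥ else V (i-1) (j+1)) ⊔ Submodule.span ℂ {wvec n (j+1)}


namespace SpAux

open Submodule Module

variable {n : ℕ} {V : ℕ → ℕ → Submodule ℂ (Wsp n)}

lemma mono_chain (hV : IsSpR n V) : ∀ a b l, 1 ≤ a → a ≤ b → b ≤ l → b + l ≤ 2*n →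
    V a l ≤ V b l := by
  intro a b
  induction b with
  | zero => intro l h1 h2 _ _; exact absurd (h1.trans h2) (by omega)
  | succ b IH =>
    intro l h1 h2 h3 h4
    rcases Nat.lt_or_ge a (b+1) with h | h
    · exact le_trans (IH l h1 (by omega) (by omega) (by omega))
        (hV.mono b l (by omega) h3 h4)
    · have : a = b+1 := by omega
      rw [this]

lemma generic_step (hV : IsSpR n V) {k l : ℕ} (hk : 1 ≤ k) (hkl : k ≤ l)
    (h2 : k + (l+1) ≤ 2*n) (hw : wvec n (l+1) ∉ V k l) :
    V k (l+1) = (V k l).map (prj n (l+1)) := by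
  have hle : (V k l).map (prj n (l+1)) ≤ V k (l+1) := hV.proj k l hk hkl h2
  have hr1 : finrank ℂ ((V k l).map (prj n (l+1))) = k := by
    rw [finrank_map_prj_of_not_mem (by omega) (by omega) hw, hV.dim k l hk hkl (by omega)]
  refine (Submodule.eq_of_le_of_finrank_le hle ?_).symm
  rw [hr1, hV.dim k (l+1) hk (by omega) h2]

lemma detect (hV : IsSpR n V) : ∀ k l, 1 ≤ k → k ≤ l → k + l ≤ 2*n →
    wvec n (l+1) ∈ V k l → ∃ k', 1 ≤ k' ∧ k' ≤ k ∧ InZ n V k' l := by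
  intro k
  induction k with
  | zero => intro l h; omega
  | succ k IH =>
    intro l h1 h2 h3 hw
    by_cases hk0 : k = 0
    · subst hk0
      refine ⟨1, le_refl _, le_refl _, ?_⟩
      show V 1 l = _
      rw [if_pos rfl, bot_sup_eq]
      have hle : Submodule.span ℂ {wvec n (l+1)} ≤ V 1 l :=
        (Submodule.span_singleton_le_iff_mem _ _).mpr hw
      refine (Submodule.eq_of_le_of_finrank_le hle ?_).symm
      rw [hV.dim 1 l (by omega) h2 h3,
        finrank_span_singleton (wvec_ne_zero (by omega) (by omega))]
    · by_cases hw' : wvec n (l+1) ∈ V k l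
      · obtain ⟨k', a, b, c⟩ := IH l (by omega) (by omega) (by omega) hw'
        exact ⟨k', a, by omega, c⟩
      · refine ⟨k+1, by omega, le_refl _, ?_⟩
        show V (k+1) l = _
        rw [if_neg (by omega)]
        simp only [Nat.add_sub_cancel]
        have hVk : V k (l+1) = (V k l).map (prj n (l+1)) :=
          generic_step hV (by omega) (by omega) (by omega) hw'
        have hle1 : V k (l+1) ≤ V (k+1) l := by
          rw [hVk]
          refine le_trans (Submodule.map_mono (hV.mono k l (by omega) (by omega) (by omega))) ?_
          exact map_prj_le_self (by omega) (by omega) hw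
        have hle2 : Submodule.span ℂ {wvec n (l+1)} ≤ V (k+1) l :=
          (Submodule.span_singleton_le_iff_mem _ _).mpr hw
        have hle : V k (l+1) ⊔ Submodule.span ℂ {wvec n (l+1)} ≤ V (k+1) l :=
          sup_le hle1 hle2
        have hwn : wvec n (l+1) ∉ V k (l+1) := fun hmem =>
          not_mem_WIJ_wvec (a := k) (b := l+1) (m := l+1) (by omega) (by omega) (by omega)
            (hV.sub k (l+1) (by omega) (by omega) (by omega) hmem)
        have hinf : V k (l+1) ⊓ Submodule.span ℂ {wvec n (l+1)} = ⊥ := by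
          rw [Submodule.eq_bot_iff]
          intro x hx
          obtain ⟨hx1, hx2⟩ := Submodule.mem_inf.mp hx
          rw [Submodule.mem_span_singleton] at hx2
          obtain ⟨c, rfl⟩ := hx2
          rcases eq_or_ne c 0 with hc | hc
          · rw [hc, zero_smul]
          · exfalso
            apply hwn
            have := Submodule.smul_mem (V k (l+1)) c⁻¹ hx1
            rwa [smul_smul, inv_mul_cancel₀ hc, one_smul] at this
        have hsup : finrank ℂ (V k (l+1) ⊔ Submodule.span ℂ {wvec n (l+1)} :
            Submodule ℂ (Wsp n)) = k+1 := by
          have h := Submodule.finrank_sup_add_finrank_inf_eq (V k (l+1))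
            (Submodule.span ℂ {wvec n (l+1)})
          rw [hinf, finrank_bot, add_zero, hV.dim k (l+1) (by omega) (by omega) (by omega),
            finrank_span_singleton (wvec_ne_zero (by omega) (by omega))] at h
          exact h
        refine (Submodule.eq_of_le_of_finrank_le hle ?_).symm
        rw [hsup, hV.dim (k+1) l (by omega) h2 h3]

lemma degen_step (hV : IsSpR n V) {k l : ℕ} (hk : 2 ≤ k) (hkl : k ≤ l)
    (h2 : k + (l+1) ≤ 2*n) (hw : wvec n (l+1) ∈ V k l) (hnz : ¬ InZ n V k l) :
    V k (l+1) = V (k-1) (l+1) ⊔ (V k l).map (prj n (l+1)) := by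
  obtain ⟨m, rfl⟩ : ∃ m, k = m + 1 := ⟨k-1, by omega⟩
  simp only [Nat.add_sub_cancel]
  have hle1 : V m (l+1) ≤ V (m+1) (l+1) := hV.mono m (l+1) (by omega) (by omega) (by omega)
  have hle2 : (V (m+1) l).map (prj n (l+1)) ≤ V (m+1) (l+1) := hV.proj (m+1) l (by omega) hkl h2
  have hle : V m (l+1) ⊔ (V (m+1) l).map (prj n (l+1)) ≤ V (m+1) (l+1) := sup_le hle1 hle2
  have hmap : finrank ℂ ((V (m+1) l).map (prj n (l+1))) + 1 = m+1 := by
    rw [finrank_map_prj_of_mem (by omega) (by omega) hw,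
      hV.dim (m+1) l (by omega) hkl (by omega)]
  have hdm : finrank ℂ (V m (l+1)) = m := hV.dim m (l+1) (by omega) (by omega) (by omega)
  have hne : V m (l+1) ≠ (V (m+1) l).map (prj n (l+1)) := by
    intro he
    apply hnz
    show V (m+1) l = _
    rw [if_neg (by omega)]
    simp only [Nat.add_sub_cancel]
    have hsub : V (m+1) l ≤ V m (l+1) ⊔ Submodule.span ℂ {wvec n (l+1)} := by
      rw [he]
      exact le_map_sup (by omega) (by omega) _
    apply Submodule.eq_of_le_of_finrank_le hsub
    have hd := Submodule.finrank_sup_add_finrank_inf_eq (V m (l+1))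
      (Submodule.span ℂ {wvec n (l+1)})
    rw [hdm, finrank_span_singleton (wvec_ne_zero (by omega) (by omega))] at hd
    rw [hV.dim (m+1) l (by omega) hkl (by omega)]
    omega
  have hfr : m+1 ≤ finrank ℂ (V m (l+1) ⊔ (V (m+1) l).map (prj n (l+1)) :
      Submodule ℂ (Wsp n)) := by
    by_contra hlt
    push_neg at hlt
    have e1 : V m (l+1) = V m (l+1) ⊔ (V (m+1) l).map (prj n (l+1)) :=
      Submodule.eq_of_le_of_finrank_le le_sup_left (by omega)
    have e2 : (V (m+1) l).map (prj n (l+1)) = V m (l+1) ⊔ (V (m+1) l).map (prj n (l+1)) :=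
      Submodule.eq_of_le_of_finrank_le le_sup_right (by omega)
    exact hne (e1.trans e2.symm)
  refine (Submodule.eq_of_le_of_finrank_le hle ?_).symm
  rw [hV.dim (m+1) (l+1) (by omega) (by omega) (by omega)]
  exact hfr

lemma lemB (hV : IsSpR n V) {c k : ℕ} (hc : c ≤ n) (hk2 : 2 ≤ k) (hkc : k ≤ c)
    (hg : ∀ k' l', 1 ≤ k' → k' ≤ l' → k' + l' ≤ 2*n → c ≤ l' → ¬ InZ n V k' l') :
    V k c ⊓ WIJ n (k-1) c = V (k-1) c := by
  have hn1 : 1 ≤ n := by omega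
  have hnot : ¬ (V k c ≤ WIJ n (k-1) c) := by
    intro hcon
    have push : ∀ l, c ≤ l → l ≤ 2*n - k → V k l ≤ WIJ n (k-1) l := by
      intro l
      induction l with
      | zero => intro h1 _; omega
      | succ l IH =>
        intro h1 h2
        by_cases hcl : c = l+1
        · rw [← hcl]; exact hcon
        · have h1' : c ≤ l := by omega
          have hstep : V k (l+1) = (V k l).map (prj n (l+1)) := by
            apply generic_step hV (by omega) (by omega) (by omega)
            intro hwmem
            obtain ⟨k', a, b, hz⟩ := detect hV k l (by omega) (by omega) (by omega) hwmem
            exact hg k' l a (by omega) (by omega) h1' hz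
          rw [hstep]
          rintro _ ⟨x, hx, rfl⟩
          exact map_prj_WIJ (IH h1' (by omega) hx)
    have hF := push (2*n-k) (by omega) (le_refl _)
    have hiso := hV.isot k (by omega) (by omega)
    have hdim := hV.dim k (2*n-k) (by omega) (by omega) (by omega)
    have hwin := isoforce (by omega) (by omega) hF hdim hiso
    have hwin' : wvec n ((2*n-k)+1) ∈ V k (2*n-k) := by
      have : (2*n-k)+1 = 2*n-k+1 := rfl
      rw [this]; exact hwin
    obtain ⟨k', a, b, hz⟩ := detect hV k (2*n-k) (by omega) (by omega) (by omega) hwin'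
    exact hg k' (2*n-k) a (by omega) (by omega) (by omega) hz
  obtain ⟨x, hxV, hxW⟩ := SetLike.not_le_iff_exists.mp hnot
  have hlt : V k c ⊓ WIJ n (k-1) c < V k c := by
    refine lt_of_le_of_ne inf_le_left (fun he => hxW ?_)
    have : x ∈ V k c ⊓ WIJ n (k-1) c := he.symm ▸ hxV
    exact this.2
  have hfr : finrank ℂ (V k c ⊓ WIJ n (k-1) c : Submodule ℂ (Wsp n)) < k := by
    have h := Submodule.finrank_lt_finrank_of_lt hlt
    rwa [hV.dim k c (by omega) hkc (by omega)] at h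
  have hmono : V (k-1) c ≤ V k c := by
    have h := hV.mono (k-1) c (by omega) (by omega) (by omega)
    have hk1 : k - 1 + 1 = k := by omega
    rwa [hk1] at h
  have hle : V (k-1) c ≤ V k c ⊓ WIJ n (k-1) c :=
    le_inf hmono (hV.sub (k-1) c (by omega) (by omega) (by omega))
  refine (Submodule.eq_of_le_of_finrank_le hle ?_).symm
  rw [hV.dim (k-1) c (by omega) (by omega) (by omega)]
  omega

lemma crux (hV : IsSpR n V) {i j : ℕ} (hi : 1 ≤ i) (hij : i ≤ j) (hjn : j+1 ≤ n)
    (hg : ∀ k' l', 1 ≤ k' → k' ≤ l' → k' + l' ≤ 2*n → j+1 ≤ l' → ¬ InZ n V k' l') :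
    V i (j+1) = V (j+1) (j+1) ⊓ WIJ n i (j+1) := by
  have chain : ∀ d, i + d ≤ j+1 → V (i+d) (j+1) ⊓ WIJ n i (j+1) = V i (j+1) := by
    intro d
    induction d with
    | zero =>
      intro _
      simp only [Nat.add_zero]
      exact inf_eq_left.mpr (hV.sub i (j+1) hi (by omega) (by omega))
    | succ d IH =>
      intro hd
      have e1 : V (i+d+1) (j+1) ⊓ WIJ n (i+d) (j+1) = V (i+d) (j+1) := by
        have h := lemB hV (c := j+1) (k := i+d+1) hjn (by omega) (by omega) hg
        simpa using h
      have hWm : WIJ n i (j+1) ≤ WIJ n (i+d) (j+1) := WIJ_mono_left (by omega)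
      show V (i+d+1) (j+1) ⊓ WIJ n i (j+1) = V i (j+1)
      calc V (i+d+1) (j+1) ⊓ WIJ n i (j+1)
          = V (i+d+1) (j+1) ⊓ (WIJ n (i+d) (j+1) ⊓ WIJ n i (j+1)) := by
            rw [inf_eq_right.mpr hWm]
        _ = (V (i+d+1) (j+1) ⊓ WIJ n (i+d) (j+1)) ⊓ WIJ n i (j+1) := by rw [inf_assoc]
        _ = V (i+d) (j+1) ⊓ WIJ n i (j+1) := by rw [e1]
        _ = V i (j+1) := IH (by omega)
  have h := chain (j+1-i) (by omega)
  rw [show i + (j+1-i) = j+1 by omega] at h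
  exact h.symm

end SpAux

theorem statement12 (n i j : ℕ) (hn : 1 ≤ n) (hi : 1 ≤ i) (hij : i ≤ j)
    (hsum : i + j ≤ 2*n) (hne : j < n ∨ i + j = 2*n)
    (V V' : ℕ → ℕ → Submodule ℂ (Wsp n)) (hV : IsSpR n V) (hV' : IsSpR n V')
    (hZ : InZ n V i j) (hZ' : InZ n V' i j)
    (hO : ∀ k l, 1 ≤ k → k ≤ l → k + l ≤ 2*n → (k, l) ≠ (i, j) → ¬ InZ n V k l)
    (hO' : ∀ k l, 1 ≤ k → k ≤ l → k + l ≤ 2*n → (k, l) ≠ (i, j) → ¬ InZ n V' k l)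
    (hdiag : ∀ k, 1 ≤ k → k ≤ n → V k k = V' k k) :
    ∀ k l, 1 ≤ k → k ≤ l → k + l ≤ 2*n → V k l = V' k l := by
  classical
  have hZe : V i j = (if i = 1 then ⊥ else V (i-1) (j+1)) ⊔ Submodule.span ℂ {wvec n (j+1)} := hZ
  have hZe' : V' i j = (if i = 1 then ⊥ else V' (i-1) (j+1)) ⊔ Submodule.span ℂ {wvec n (j+1)} := hZ'
  have hZw : wvec n (j+1) ∈ V i j := by
    rw [hZe]
    exact Submodule.mem_sup_right (Submodule.mem_span_singleton_self _)
  have hZw' : wvec n (j+1) ∈ V' i j := by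
    rw [hZe']
    exact Submodule.mem_sup_right (Submodule.mem_span_singleton_self _)
  have key : ∀ l k, 1 ≤ k → k ≤ l → k + l ≤ 2*n → V k l = V' k l := by
    intro l
    induction l using Nat.strong_induction_on with
    | _ l IHl =>
    intro k
    induction k using Nat.strong_induction_on with
    | _ k IHk =>
    intro hk hkl h2
    rcases eq_or_lt_of_le hkl with heq | hlt
    · subst heq
      exact hdiag k hk (by omega)
    · obtain ⟨m, rfl⟩ : ∃ m, l = m + 1 := ⟨l-1, by omega⟩
      have hkm : k ≤ m := by omega
      by_cases hmj : m = j ∧ i ≤ k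
      · obtain ⟨hm, hik⟩ := hmj
        subst hm
        rcases eq_or_lt_of_le hik with hki | hki
        · subst hki
          have hjn : m + 1 ≤ n := by
            rcases hne with h | h
            · omega
            · omega
          have e1 := SpAux.crux hV hi hij hjn (fun k' l' a b c d =>
            hO k' l' a b c (by intro he; rw [Prod.mk.injEq] at he; omega))
          have e2 := SpAux.crux hV' hi hij hjn (fun k' l' a b c d =>
            hO' k' l' a b c (by intro he; rw [Prod.mk.injEq] at he; omega))
          rw [e1, e2, hdiag (m+1) (by omega) hjn]
        · have hw1 : wvec n (m+1) ∈ V k m :=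
            SpAux.mono_chain hV i k m hi (by omega) (by omega) (by omega) hZw
          have hw2 : wvec n (m+1) ∈ V' k m :=
            SpAux.mono_chain hV' i k m hi (by omega) (by omega) (by omega) hZw'
          have hnz : ¬ InZ n V k m :=
            hO k m (by omega) (by omega) (by omega)
              (by intro he; rw [Prod.mk.injEq] at he; omega)
          have hnz' : ¬ InZ n V' k m :=
            hO' k m (by omega) (by omega) (by omega)
              (by intro he; rw [Prod.mk.injEq] at he; omega)
          have d1 := SpAux.degen_step hV (by omega) (by omega) (by omega) hw1 hnz
          have d2 := SpAux.degen_step hV' (by omega) (by omega) (by omega) hw2 hnz'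
          rw [d1, d2, IHl m (by omega) k (by omega) (by omega) (by omega),
            IHk (k-1) (by omega) (by omega) (by omega) (by omega)]
      · have hnm : wvec n (m+1) ∉ V k m := by
          intro hmem
          obtain ⟨k', a, b, hz⟩ := SpAux.detect hV k m (by omega) hkm (by omega) hmem
          refine hO k' m a (by omega) (by omega) ?_ hz
          intro he
          rw [Prod.mk.injEq] at he
          exact hmj ⟨he.2, by omega⟩
        have hnm' : wvec n (m+1) ∉ V' k m := by
          intro hmem
          obtain ⟨k', a, b, hz⟩ := SpAux.detect hV' k m (by omega) hkm (by omega) hmem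
          refine hO' k' m a (by omega) (by omega) ?_ hz
          intro he
          rw [Prod.mk.injEq] at he
          exact hmj ⟨he.2, by omega⟩
        have s1 := SpAux.generic_step hV hk hkm (by omega) hnm
        have s2 := SpAux.generic_step hV' hk hkm (by omega) hnm'
        rw [s1, s2, IHl m (by omega) k hk hkm (by omega)]
  intro k l hk hkl h2
  exact key l k hk hkl h2
end
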